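/- Let d be a spacetime metric on ℝ². Then for every (x, s; y, t) with s < t, every geodesic from (x,s) to (y,t) is of the form {(π(r), r) : r ∈ [s, t]} for some continuous function π : [s,t] → ℝ with π(s) = x and π(t) = y, and the only compatible order on the geodesic is the order induced by the time coordinate. -/

import Mathlib

open Filter Topology

section Helpers

lemma ereal_cancel_right {a b k : EReal} (hkb : k ≠ ⊥) (hkt : k ≠ ⊤)
    (h : a + k = b + k) : a = b := by
  have hk : ((k.toReal : ℝ) : EReal) = k := EReal.coe_toReal hkt hkb
  rw [← hk] at h
  have h2 : a + ((k.toReal : ℝ) : EReal) - (k.toReal : ℝ) =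
      b + ((k.toReal : ℝ) : EReal) - (k.toReal : ℝ) := by rw [h]
  rwa [EReal.add_sub_cancel_right, EReal.add_sub_cancel_right] at h2

lemma ereal_cancel_left {a b k : EReal} (hkb : k ≠ ⊥) (hkt : k ≠ ⊤)
    (h : k + a = k + b) : a = b := by
  rw [add_comm k a, add_comm k b] at h
  exact ereal_cancel_right hkb hkt h

lemma ereal_add_ne_bot_left {a b : EReal} (h : a + b ≠ ⊥) : a ≠ ⊥ := by
  rintro rfl; simp at h

lemma ereal_add_ne_bot_right {a b : EReal} (h : a + b ≠ ⊥) (ha : a ≠ ⊤) : b ≠ ⊥ := by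
  rintro rfl
  exact h (by simp)

end Helpers

/-- `le` is a compatible total order on the geodesic set `A` from `x` to `y`
for the directed metric `d`. -/
def CompatibleOrder {S : Type*} (d : S → S → EReal) (x y : S) (A : Set S)
    (le : S → S → Prop) : Prop :=
  (∀ a ∈ A, le a a) ∧
  (∀ a ∈ A, ∀ b ∈ A, le a b → le b a → a = b) ∧
  (∀ a ∈ A, ∀ b ∈ A, ∀ c ∈ A, le a b → le b c → le a c) ∧
  (∀ a ∈ A, ∀ b ∈ A, le a b ∨ le b a) ∧
  (∀ z ∈ A, le x z ∧ le z y) ∧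
  (∀ a ∈ A, ∀ b ∈ A, ∀ c ∈ A, le a b → le b c → d a c = d a b + d b c)

/-- `A` is a geodesic set from `x` to `y` for the directed metric `d`. -/
def IsGeodesicSet {S : Type*} (d : S → S → EReal) (x y : S) (A : Set S) : Prop :=
  x ∈ A ∧ y ∈ A ∧ ∃ le : S → S → Prop, CompatibleOrder d x y A le

/-- `A` is a geodesic from `x` to `y`: a maximal geodesic set under inclusion. -/
def IsGeodesic {S : Type*} (d : S → S → EReal) (x y : S) (A : Set S) : Prop :=
  IsGeodesicSet d x y A ∧
    ∀ B : Set S, IsGeodesicSet d x y B → A ⊆ B → B = A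

/-- A spacetime metric on `ℝ²` (points written `(x, s)` with `s` the time
coordinate): a directed metric of negative sign, continuous off the diagonal,
finite exactly when the time coordinates are strictly increasing (or on the
diagonal) and `−∞` elsewhere, satisfying the metric composition law (with the
supremum attained), and such that all geodesics between ordered endpoints are
contained in a compact product set. -/
def SpacetimeMetric (d : ℝ × ℝ → ℝ × ℝ → EReal) : Prop :=
  (∀ u, d u u = 0) ∧
  (∀ u v w, d u v + d v w ≤ d u w) ∧
  (∀ u v, d u v ≠ ⊤) ∧
  (∀ u v : ℝ × ℝ, u ≠ v → (d u v ≠ ⊥ ↔ u.2 < v.2)) ∧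
  ContinuousOn (fun p : (ℝ × ℝ) × (ℝ × ℝ) => d p.1 p.2) {p | p.1 ≠ p.2} ∧
  (∀ x s y t r : ℝ, s < r → r < t →
    (d (x, s) (y, t) = ⨆ z : ℝ, (d (x, s) (z, r) + d (z, r) (y, t))) ∧
    ∃ z : ℝ, d (x, s) (y, t) = d (x, s) (z, r) + d (z, r) (y, t)) ∧
  (∀ x s y t : ℝ, s < t → ∃ a b : ℝ, ∀ A : Set (ℝ × ℝ),
    IsGeodesic d (x, s) (y, t) A → A ⊆ Set.Icc a b ×ˢ Set.Icc s t)

lemma ord_char {d : ℝ × ℝ → ℝ × ℝ → EReal} (hd : SpacetimeMetric d) {x s y t : ℝ}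
    (hst : s < t) {A : Set (ℝ × ℝ)} (hxA : (x, s) ∈ A) (hyA : (y, t) ∈ A)
    {le : ℝ × ℝ → ℝ × ℝ → Prop} (hc : CompatibleOrder d (x, s) (y, t) A le) :
    ∀ a ∈ A, ∀ b ∈ A, (le a b ↔ a.2 ≤ b.2) := by
  obtain ⟨hzero, htri, htop, hbot, hcont, hcomp, hgeo⟩ := hd
  obtain ⟨hrefl, hanti, htrans, htot, hends, hadd⟩ := hc
  have hxy : (x, s) ≠ (y, t) := by
    intro h; rw [Prod.mk.injEq] at h; exact absurd h.2 hst.ne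
  have hD : d (x, s) (y, t) ≠ ⊥ := (hbot _ _ hxy).mpr hst
  have key : ∀ a ∈ A, ∀ b ∈ A, le a b → d a b ≠ ⊥ := by
    intro a ha b hb hab
    have e1 : d (x, s) b = d (x, s) a + d a b :=
      hadd _ hxA _ ha _ hb (hends a ha).1 hab
    have e2 : d (x, s) (y, t) = d (x, s) b + d b (y, t) :=
      hadd _ hxA _ hb _ hyA (hends b hb).1 (hends b hb).2
    have h1 : d (x, s) b ≠ ⊥ := ereal_add_ne_bot_left (e2 ▸ hD)
    exact ereal_add_ne_bot_right (e1 ▸ h1) (htop _ _)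
  have L1 : ∀ a ∈ A, ∀ b ∈ A, le a b → a.2 ≤ b.2 := by
    intro a ha b hb hab
    rcases eq_or_ne a b with rfl | hne
    · exact le_rfl
    · exact le_of_lt ((hbot a b hne).mp (key a ha b hb hab))
  intro a ha b hb
  refine ⟨L1 a ha b hb, fun h => ?_⟩
  rcases htot a ha b hb with h' | h'
  · exact h'
  · rcases eq_or_ne a b with rfl | hne
    · exact hrefl a ha
    · have := (hbot b a (Ne.symm hne)).mp (key b hb a ha h')
      exact absurd h (not_le.mpr this)

/-- In a spacetime metric, every geodesic from `(x,s)` to `(y,t)` (with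
`s < t`) is the graph `{(π(r), r) : r ∈ [s,t]}` of a continuous function `π`
with `π(s) = x`, `π(t) = y`, and the only compatible order on the geodesic is
the order induced by the time coordinate. -/
theorem spacetime_geodesic_is_graph (d : ℝ × ℝ → ℝ × ℝ → EReal)
    (hd : SpacetimeMetric d) (x s y t : ℝ) (hst : s < t)
    (A : Set (ℝ × ℝ)) (hA : IsGeodesic d (x, s) (y, t) A) :
    (∃ π : ℝ → ℝ, ContinuousOn π (Set.Icc s t) ∧ π s = x ∧ π t = y ∧
      A = {p : ℝ × ℝ | p.2 ∈ Set.Icc s t ∧ p.1 = π p.2}) ∧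
    (∀ le : ℝ × ℝ → ℝ × ℝ → Prop,
      CompatibleOrder d (x, s) (y, t) A le →
      ∀ a ∈ A, ∀ b ∈ A, (le a b ↔ a.2 ≤ b.2)) := by
  obtain ⟨⟨hxA, hyA, le0, hc0⟩, hmax⟩ := hA
  have hd' := hd
  obtain ⟨hzero, htri, htop, hbot, hcont, hcomp, hgeo⟩ := hd'
  have hxy : (x, s) ≠ (y, t) := by
    intro h; rw [Prod.mk.injEq] at h; exact absurd h.2 hst.ne
  have hD : d (x, s) (y, t) ≠ ⊥ := (hbot _ _ hxy).mpr hst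
  have hchar := ord_char hd hst hxA hyA hc0
  have hinj : ∀ a ∈ A, ∀ b ∈ A, a.2 = b.2 → a = b := by
    intro a ha b hb h
    exact hc0.2.1 a ha b hb ((hchar a ha b hb).mpr h.le) ((hchar b hb a ha).mpr h.ge)
  have hadd0 : ∀ a ∈ A, ∀ b ∈ A, ∀ c ∈ A, a.2 ≤ b.2 → b.2 ≤ c.2 →
      d a c = d a b + d b c := by
    intro a ha b hb c hc h1 h2
    exact hc0.2.2.2.2.2 a ha b hb c hc ((hchar a ha b hb).mpr h1) ((hchar b hb c hc).mpr h2)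
  have htimes : ∀ z ∈ A, z.2 ∈ Set.Icc s t := fun z hz =>
    ⟨(hchar _ hxA z hz).mp (hc0.2.2.2.2.1 z hz).1,
     (hchar z hz _ hyA).mp (hc0.2.2.2.2.1 z hz).2⟩
  -- continuity tools
  have hca : ∀ u v : ℝ × ℝ, u ≠ v →
      ContinuousAt (fun p : (ℝ × ℝ) × (ℝ × ℝ) => d p.1 p.2) (u, v) := by
    intro u v huv
    exact hcont.continuousAt
      ((isOpen_ne_fun continuous_fst continuous_snd).mem_nhds huv)
  have htend : ∀ {u v : ℝ × ℝ}, u ≠ v → ∀ {p q : ℕ → ℝ × ℝ},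
      Tendsto p atTop (𝓝 u) → Tendsto q atTop (𝓝 v) →
      Tendsto (fun n => d (p n) (q n)) atTop (𝓝 (d u v)) := by
    intro u v huv p q hp hq
    exact ((hca u v huv).tendsto).comp (hp.prodMk_nhds hq)
  have haddt : ∀ {a b : EReal}, a ≠ ⊤ → b ≠ ⊤ → ∀ {f g : ℕ → EReal},
      Tendsto f atTop (𝓝 a) → Tendsto g atTop (𝓝 b) →
      Tendsto (fun n => f n + g n) atTop (𝓝 (a + b)) := by
    intro a b ha hb f g hf hg
    exact (EReal.continuousAt_add (Or.inl ha) (Or.inr hb)).tendsto.comp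
      (hf.prodMk_nhds hg)
  obtain ⟨a0, b0, hbd⟩ := hgeo x s y t hst
  have hAbd : A ⊆ Set.Icc a0 b0 ×ˢ Set.Icc s t := hbd A ⟨⟨hxA, hyA, le0, hc0⟩, hmax⟩
  -- one-sided limit lemmas
  have hSubL : ∀ r0 : ℝ, r0 < t → ∀ u Q : ℝ × ℝ, u ∈ closure A → u.2 = r0 →
      Q.2 = r0 → u ≠ Q → ∀ q : ℕ → ℝ × ℝ, (∀ m, q m ∈ A) →
      (∀ m, r0 < (q m).2) → Tendsto q atTop (𝓝 Q) → False := by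
    intro r0 hr0t u Q hu hu2 hQ2 huQ q hqA hqgt hqQ
    have huyt : u ≠ (y, t) := by
      rintro rfl; exact hr0t.ne hu2.symm
    obtain ⟨an, hanA, hanu⟩ := mem_closure_iff_seq_limit.mp hu
    have han2 : Tendsto (fun n => (an n).2) atTop (𝓝 u.2) :=
      (continuous_snd.tendsto u).comp hanu
    have step1 : ∀ m, d u (y, t) = d u (q m) + d (q m) (y, t) := by
      intro m
      have hum : u ≠ q m := by
        intro h
        have := hqgt m
        rw [← h, hu2] at this
        exact lt_irrefl _ this
      have hev : ∀ᶠ n in atTop, d (an n) (y, t) = d (an n) (q m) + d (q m) (y, t) := by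
        have hlt : ∀ᶠ n in atTop, (an n).2 < (q m).2 :=
          han2.eventually_lt tendsto_const_nhds (by rw [hu2]; exact hqgt m)
        exact hlt.mono fun n hn =>
          hadd0 _ (hanA n) _ (hqA m) _ hyA hn.le (htimes _ (hqA m)).2
      have t1 : Tendsto (fun n => d (an n) (y, t)) atTop (𝓝 (d u (y, t))) :=
        htend huyt hanu tendsto_const_nhds
      have t2 : Tendsto (fun n => d (an n) (q m) + d (q m) (y, t)) atTop
          (𝓝 (d u (q m) + d (q m) (y, t))) :=
        haddt (htop _ _) (htop _ _) (htend hum hanu tendsto_const_nhds) tendsto_const_nhds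
      exact tendsto_nhds_unique (Filter.Tendsto.congr' hev t1) t2
    have hQyt : Q ≠ (y, t) := by
      rintro rfl; exact hr0t.ne hQ2.symm
    have t3 : Tendsto (fun m => d u (q m) + d (q m) (y, t)) atTop
        (𝓝 (d u Q + d Q (y, t))) :=
      haddt (htop _ _) (htop _ _) (htend huQ tendsto_const_nhds hqQ)
        (htend hQyt hqQ tendsto_const_nhds)
    have e : d u (y, t) = d u Q + d Q (y, t) :=
      tendsto_nhds_unique (tendsto_const_nhds.congr fun m => step1 m) t3
    have hbQ : d u Q = ⊥ := by
      by_contra h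
      have := (hbot u Q huQ).mp h
      rw [hu2, hQ2] at this
      exact lt_irrefl _ this
    rw [hbQ, EReal.bot_add] at e
    exact (hbot u (y, t) huyt).mpr (by rw [hu2]; exact hr0t) e
  have hSubL' : ∀ r0 : ℝ, s < r0 → ∀ u Q : ℝ × ℝ, u ∈ closure A → u.2 = r0 →
      Q.2 = r0 → u ≠ Q → ∀ q : ℕ → ℝ × ℝ, (∀ m, q m ∈ A) →
      (∀ m, (q m).2 < r0) → Tendsto q atTop (𝓝 Q) → False := by
    intro r0 hsr0 u Q hu hu2 hQ2 huQ q hqA hqlt hqQ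
    have huxs : u ≠ (x, s) := by
      rintro rfl; exact hsr0.ne hu2
    obtain ⟨an, hanA, hanu⟩ := mem_closure_iff_seq_limit.mp hu
    have han2 : Tendsto (fun n => (an n).2) atTop (𝓝 u.2) :=
      (continuous_snd.tendsto u).comp hanu
    have step1 : ∀ m, d (x, s) u = d (x, s) (q m) + d (q m) u := by
      intro m
      have hum : q m ≠ u := by
        intro h
        have := hqlt m
        rw [h, hu2] at this
        exact lt_irrefl _ this
      have hev : ∀ᶠ n in atTop, d (x, s) (an n) = d (x, s) (q m) + d (q m) (an n) := by
        have hlt : ∀ᶠ n in atTop, (q m).2 < (an n).2 :=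
          Filter.Tendsto.eventually_lt tendsto_const_nhds han2 (by rw [hu2]; exact hqlt m)
        exact hlt.mono fun n hn =>
          hadd0 _ hxA _ (hqA m) _ (hanA n) (htimes _ (hqA m)).1 hn.le
      have t1 : Tendsto (fun n => d (x, s) (an n)) atTop (𝓝 (d (x, s) u)) :=
        htend (Ne.symm huxs) tendsto_const_nhds hanu
      have t2 : Tendsto (fun n => d (x, s) (q m) + d (q m) (an n)) atTop
          (𝓝 (d (x, s) (q m) + d (q m) u)) :=
        haddt (htop _ _) (htop _ _) tendsto_const_nhds (htend hum tendsto_const_nhds hanu)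
      exact tendsto_nhds_unique (Filter.Tendsto.congr' hev t1) t2
    have hQxs : (x, s) ≠ Q := by
      intro h; rw [← h] at hQ2; exact hsr0.ne hQ2
    have t3 : Tendsto (fun m => d (x, s) (q m) + d (q m) u) atTop
        (𝓝 (d (x, s) Q + d Q u)) :=
      haddt (htop _ _) (htop _ _) (htend hQxs tendsto_const_nhds hqQ)
        (htend (Ne.symm huQ) hqQ tendsto_const_nhds)
    have e : d (x, s) u = d (x, s) Q + d Q u :=
      tendsto_nhds_unique (tendsto_const_nhds.congr fun m => step1 m) t3
    have hbQ : d Q u = ⊥ := by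
      by_contra h
      have := (hbot Q u (Ne.symm huQ)).mp h
      rw [hu2, hQ2] at this
      exact lt_irrefl _ this
    rw [hbQ, EReal.add_bot] at e
    exact (hbot (x, s) u (Ne.symm huxs)).mpr (by rw [hu2]; exact hsr0) e
  -- injectivity of the time coordinate on the closure
  have hclos_inj : ∀ P ∈ closure A, ∀ Q ∈ closure A, P.2 = Q.2 → P = Q := by
    have hone : ∀ P Q : ℝ × ℝ, P ∈ closure A → Q ∈ closure A → Q ∉ A →
        P.2 = Q.2 → P ≠ Q → False := by
      intro P Q hP hQc hQA h2 hne
      obtain ⟨qn, hqnA, hqnQ⟩ := mem_closure_iff_seq_limit.mp hQc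
      have hner : ∀ᶠ m in atTop, (qn m).2 ≠ Q.2 := by
        by_contra h
        rw [Filter.not_eventually] at h
        obtain ⟨φ, hφmono, hφ⟩ :=
          Filter.extraction_of_frequently_atTop (h.mono fun m hm => not_not.mp hm)
        have hconst : ∀ k, qn (φ k) = qn (φ 0) := fun k =>
          hinj _ (hqnA _) _ (hqnA _) (by rw [hφ k, hφ 0])
        have htnd : Tendsto (fun k => qn (φ k)) atTop (𝓝 Q) :=
          hqnQ.comp hφmono.tendsto_atTop
        have hQeq : Q = qn (φ 0) :=
          tendsto_nhds_unique (Filter.Tendsto.congr hconst htnd) tendsto_const_nhds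
        exact hQA (hQeq ▸ hqnA (φ 0))
      by_cases hup : ∃ᶠ m in atTop, Q.2 < (qn m).2
      · obtain ⟨φ, hφmono, hφ⟩ := Filter.extraction_of_frequently_atTop hup
        have hr0t : Q.2 < t := lt_of_lt_of_le (hφ 0) (htimes _ (hqnA _)).2
        exact hSubL Q.2 hr0t P Q hP h2 rfl hne (fun k => qn (φ k))
          (fun k => hqnA _) hφ (hqnQ.comp hφmono.tendsto_atTop)
      · have hdown : ∃ᶠ m in atTop, (qn m).2 < Q.2 := by
          rw [Filter.not_frequently] at hup
          exact ((hner.and hup).mono fun m hm =>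
            lt_of_le_of_ne (not_lt.mp hm.2) hm.1).frequently
        obtain ⟨φ, hφmono, hφ⟩ := Filter.extraction_of_frequently_atTop hdown
        have hsr0 : s < Q.2 := lt_of_le_of_lt (htimes _ (hqnA (φ 0))).1 (hφ 0)
        exact hSubL' Q.2 hsr0 P Q hP h2 rfl hne (fun k => qn (φ k))
          (fun k => hqnA _) hφ (hqnQ.comp hφmono.tendsto_atTop)
    intro P hP Q hQ h2
    by_contra hne
    by_cases hQA : Q ∈ A
    · by_cases hPA : P ∈ A
      · exact hne (hinj P hPA Q hQA h2)
      · exact hone Q P hQ hP hPA h2.symm (Ne.symm hne)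
    · exact hone P Q hP hQ hQA h2 hne
  -- the closure of A is a geodesic set, hence A is closed and compact
  have hclosGS : IsGeodesicSet d (x, s) (y, t) (closure A) := by
    refine ⟨subset_closure hxA, subset_closure hyA, fun p q => p.2 ≤ q.2,
      fun a _ => le_rfl,
      fun a ha b hb h1 h2 => hclos_inj a ha b hb (le_antisymm h1 h2),
      fun a _ b _ c _ h1 h2 => le_trans h1 h2,
      fun a _ b _ => le_total _ _, ?_, ?_⟩
    · intro z hz
      have := closure_minimal hAbd (isClosed_Icc.prod isClosed_Icc) hz
      exact ⟨this.2.1, this.2.2⟩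
    · intro a ha b hb c hc h1 h2
      rcases eq_or_lt_of_le h1 with he | h1'
      · rw [hclos_inj a ha b hb he, hzero, zero_add]
      · rcases eq_or_lt_of_le h2 with he | h2'
        · rw [hclos_inj b hb c hc he, hzero, add_zero]
        · obtain ⟨an, hanA, hana⟩ := mem_closure_iff_seq_limit.mp ha
          obtain ⟨bn, hbnA, hbnb⟩ := mem_closure_iff_seq_limit.mp hb
          obtain ⟨cn, hcnA, hcnc⟩ := mem_closure_iff_seq_limit.mp hc
          have ha2 : Tendsto (fun n => (an n).2) atTop (𝓝 a.2) :=
            (continuous_snd.tendsto a).comp hana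
          have hb2 : Tendsto (fun n => (bn n).2) atTop (𝓝 b.2) :=
            (continuous_snd.tendsto b).comp hbnb
          have hc2 : Tendsto (fun n => (cn n).2) atTop (𝓝 c.2) :=
            (continuous_snd.tendsto c).comp hcnc
          have hev : ∀ᶠ n in atTop,
              d (an n) (cn n) = d (an n) (bn n) + d (bn n) (cn n) :=
            ((ha2.eventually_lt hb2 h1').and (hb2.eventually_lt hc2 h2')).mono
              fun n hn => hadd0 _ (hanA n) _ (hbnA n) _ (hcnA n) hn.1.le hn.2.le
          have hab : a ≠ b := by
            intro h; rw [h] at h1'; exact lt_irrefl _ h1'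
          have hbc : b ≠ c := by
            intro h; rw [h] at h2'; exact lt_irrefl _ h2'
          have hac : a ≠ c := by
            intro h; rw [h] at h1'; exact absurd h2' (not_lt.mpr h1'.le)
          exact tendsto_nhds_unique
            (Filter.Tendsto.congr' hev (htend hac hana hcnc))
            (haddt (htop _ _) (htop _ _) (htend hab hana hbnb) (htend hbc hbnb hcnc))
  have hAcl : closure A = A := hmax _ hclosGS subset_closure
  have hclosed : IsClosed A := hAcl ▸ isClosed_closure
  have hcpt : IsCompact A :=
    (isCompact_Icc.prod isCompact_Icc).of_isClosed_subset hclosed hAbd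
  -- every time in [s,t] is attained
  have hTfull : ∀ r ∈ Set.Icc s t, ∃ p ∈ A, p.2 = r := by
    intro r hr
    by_contra hcon
    push_neg at hcon
    have hsr : s < r := lt_of_le_of_ne hr.1 (hcon _ hxA)
    have hrt : r < t := lt_of_le_of_ne hr.2 (Ne.symm (hcon _ hyA))
    have hTcpt : IsCompact (Prod.snd '' A) := hcpt.image continuous_snd
    have hK1cpt : IsCompact (Prod.snd '' A ∩ Set.Icc s r) := hTcpt.inter_right isClosed_Icc
    have hK1ne : (Prod.snd '' A ∩ Set.Icc s r).Nonempty :=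
      ⟨s, ⟨(x, s), hxA, rfl⟩, le_rfl, hsr.le⟩
    obtain ⟨hs1, hs2⟩ := hK1cpt.sSup_mem hK1ne
    obtain ⟨P, hPA, hP2⟩ := hs1
    have hs1r : P.2 < r := lt_of_le_of_ne (hP2 ▸ hs2.2) (hcon P hPA)
    have hK2cpt : IsCompact (Prod.snd '' A ∩ Set.Icc r t) := hTcpt.inter_right isClosed_Icc
    have hK2ne : (Prod.snd '' A ∩ Set.Icc r t).Nonempty :=
      ⟨t, ⟨(y, t), hyA, rfl⟩, hrt.le, le_rfl⟩
    obtain ⟨ht1, ht2⟩ := hK2cpt.sInf_mem hK2ne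
    obtain ⟨Q, hQA, hQ2⟩ := ht1
    have hrt1 : r < Q.2 := lt_of_le_of_ne (hQ2 ▸ ht2.1) (Ne.symm (hcon Q hQA))
    have hgap1 : ∀ p ∈ A, p.2 < r → p.2 ≤ P.2 := by
      intro p hp h
      rw [hP2]
      exact le_csSup hK1cpt.bddAbove ⟨⟨p, hp, rfl⟩, (htimes p hp).1, h.le⟩
    have hgap2 : ∀ p ∈ A, r < p.2 → Q.2 ≤ p.2 := by
      intro p hp h
      rw [hQ2]
      exact csInf_le hK2cpt.bddBelow ⟨⟨p, hp, rfl⟩, h.le, (htimes p hp).2⟩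
    obtain ⟨z, hz⟩ := (hcomp P.1 P.2 Q.1 Q.2 r hs1r hrt1).2
    simp only [Prod.mk.eta] at hz
    set Z : ℝ × ℝ := (z, r) with hZdef
    have hF1 : ∀ p ∈ A, p.2 < r → ∀ q' ∈ A, r < q'.2 → d p q' = d p Z + d Z q' := by
      intro p hp hpr q' hq' hrq'
      have e1 : d p q' = d p P + d P q' :=
        hadd0 p hp P hPA q' hq' (hgap1 p hp hpr) ((hs1r.trans hrq').le)
      have e2 : d P q' = d P Q + d Q q' :=
        hadd0 P hPA Q hQA q' hq' ((hs1r.trans hrt1).le) (hgap2 q' hq' hrq')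
      refine le_antisymm ?_ (htri p Z q')
      calc d p q' = (d p P + d P Z) + (d Z Q + d Q q') := by
            rw [e1, e2, hz]; simp only [add_assoc]
        _ ≤ d p Z + d Z q' := add_le_add (htri p P Z) (htri Z Q q')
    have hDz : d (x, s) (y, t) = d (x, s) Z + d Z (y, t) :=
      hF1 (x, s) hxA hsr (y, t) hyA hrt
    have hZb1 : d (x, s) Z ≠ ⊥ := ereal_add_ne_bot_left (hDz ▸ hD)
    have hZb2 : d Z (y, t) ≠ ⊥ := ereal_add_ne_bot_right (hDz ▸ hD) (htop _ _)
    have hF2 : ∀ a ∈ A, ∀ b ∈ A, a.2 ≤ b.2 → b.2 < r → d a Z = d a b + d b Z := by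
      intro a ha b hb hab hbr
      have e1 : d a (y, t) = d a Z + d Z (y, t) :=
        hF1 a ha (lt_of_le_of_lt hab hbr) (y, t) hyA hrt
      have e2 : d b (y, t) = d b Z + d Z (y, t) := hF1 b hb hbr (y, t) hyA hrt
      have e3 : d a (y, t) = d a b + d b (y, t) :=
        hadd0 a ha b hb (y, t) hyA hab (htimes b hb).2
      apply ereal_cancel_right hZb2 (htop _ _)
      rw [← e1, e3, e2, add_assoc]
    have hF3 : ∀ b ∈ A, ∀ c ∈ A, r < b.2 → b.2 ≤ c.2 → d Z c = d Z b + d b c := by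
      intro b hb c hc hrb hbc
      have e1 : d (x, s) c = d (x, s) Z + d Z c :=
        hF1 (x, s) hxA hsr c hc (lt_of_lt_of_le hrb hbc)
      have e2 : d (x, s) b = d (x, s) Z + d Z b := hF1 (x, s) hxA hsr b hb hrb
      have e3 : d (x, s) c = d (x, s) b + d b c :=
        hadd0 (x, s) hxA b hb c hc (htimes b hb).1 hbc
      apply ereal_cancel_left hZb1 (htop _ _)
      rw [← e1, e3, e2, add_assoc]
    have hZA : Z ∉ A := fun h => hcon Z h rfl
    have hBinj : ∀ a ∈ insert Z A, ∀ b ∈ insert Z A, a.2 = b.2 → a = b := by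
      intro a ha b hb h
      rcases Set.mem_insert_iff.mp ha with rfl | ha
      · rcases Set.mem_insert_iff.mp hb with rfl | hb
        · rfl
        · exact absurd h.symm (hcon b hb)
      · rcases Set.mem_insert_iff.mp hb with rfl | hb
        · exact absurd h (hcon a ha)
        · exact hinj a ha b hb h
    have hBGS : IsGeodesicSet d (x, s) (y, t) (insert Z A) := by
      refine ⟨Set.mem_insert_of_mem _ hxA, Set.mem_insert_of_mem _ hyA,
        fun p q => p.2 ≤ q.2, fun a _ => le_rfl,
        fun a ha b hb h1 h2 => hBinj a ha b hb (le_antisymm h1 h2),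
        fun a _ b _ c _ h1 h2 => le_trans h1 h2,
        fun a _ b _ => le_total _ _, ?_, ?_⟩
      · intro w hw
        rcases Set.mem_insert_iff.mp hw with rfl | hw
        · exact ⟨hsr.le, hrt.le⟩
        · exact ⟨(htimes w hw).1, (htimes w hw).2⟩
      · intro a ha b hb c hc h1 h2
        rcases eq_or_lt_of_le h1 with he | h1'
        · rw [hBinj a ha b hb he, hzero, zero_add]
        · rcases eq_or_lt_of_le h2 with he | h2'
          · rw [hBinj b hb c hc he, hzero, add_zero]
          · rcases Set.mem_insert_iff.mp ha with rfl | ha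
            · rcases Set.mem_insert_iff.mp hb with rfl | hb
              · exact absurd h1' (lt_irrefl _)
              · rcases Set.mem_insert_iff.mp hc with rfl | hc
                · exact absurd (h1'.trans h2') (lt_irrefl _)
                · exact hF3 b hb c hc h1' h2'.le
            · rcases Set.mem_insert_iff.mp hb with rfl | hb
              · rcases Set.mem_insert_iff.mp hc with rfl | hc
                · exact absurd h2' (lt_irrefl _)
                · exact hF1 a ha h1' c hc h2'
              · rcases Set.mem_insert_iff.mp hc with rfl | hc
                · exact hF2 a ha b hb h1'.le h2'
                · exact hadd0 a ha b hb c hc h1'.le h2'.le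
    have hBeq := hmax _ hBGS (Set.subset_insert _ _)
    exact hZA (hBeq ▸ Set.mem_insert Z A)
  -- construct π
  haveI hcs : CompactSpace A := isCompact_iff_compactSpace.mp hcpt
  let g : A → Set.Icc s t := fun p => ⟨(p : ℝ × ℝ).2, htimes _ p.2⟩
  have hgc : Continuous g :=
    Continuous.subtype_mk (continuous_snd.comp continuous_subtype_val) _
  have hgb : Function.Bijective g := by
    constructor
    · intro p q h
      exact Subtype.ext (hinj _ p.2 _ q.2 (congrArg Subtype.val h))
    · intro r
      obtain ⟨p, hpA, hp2⟩ := hTfull r r.2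
      exact ⟨⟨p, hpA⟩, Subtype.ext hp2⟩
  let e : A ≃ Set.Icc s t := Equiv.ofBijective g hgb
  have hec : Continuous e := hgc
  let h : A ≃ₜ Set.Icc s t := Continuous.homeoOfEquivCompactToT2 (f := e) hec
  let π : ℝ → ℝ := fun r => if hr : r ∈ Set.Icc s t then
    ((h.symm ⟨r, hr⟩ : A) : ℝ × ℝ).1 else x
  have hπval : ∀ (r : ℝ) (hr : r ∈ Set.Icc s t),
      π r = ((h.symm ⟨r, hr⟩ : A) : ℝ × ℝ).1 := fun r hr => dif_pos hr
  have hgraph : ∀ (r : ℝ) (hr : r ∈ Set.Icc s t), (π r, r) ∈ A := by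
    intro r hr
    have h1 : ((h.symm ⟨r, hr⟩ : A) : ℝ × ℝ) ∈ A := (h.symm ⟨r, hr⟩ : A).2
    have h2 : ((h.symm ⟨r, hr⟩ : A) : ℝ × ℝ).2 = r := by
      have := h.apply_symm_apply ⟨r, hr⟩
      exact congrArg Subtype.val this
    have h3 : (π r, r) = ((h.symm ⟨r, hr⟩ : A) : ℝ × ℝ) :=
      Prod.ext (hπval r hr) h2.symm
    rw [h3]; exact h1
  have hπs : π s = x := by
    have h1 := hgraph s (Set.left_mem_Icc.mpr hst.le)
    have h2 := hinj _ h1 _ hxA rfl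
    exact congrArg Prod.fst h2
  have hπt : π t = y := by
    have h1 := hgraph t (Set.right_mem_Icc.mpr hst.le)
    have h2 := hinj _ h1 _ hyA rfl
    exact congrArg Prod.fst h2
  have hAeq2 : A = {p : ℝ × ℝ | p.2 ∈ Set.Icc s t ∧ p.1 = π p.2} := by
    ext p
    constructor
    · intro hp
      refine ⟨htimes p hp, ?_⟩
      have h1 := hgraph p.2 (htimes p hp)
      have h2 := hinj p hp _ h1 rfl
      exact congrArg Prod.fst h2
    · rintro ⟨hp2, hp1⟩
      have h1 := hgraph p.2 hp2
      have hpe : p = (π p.2, p.2) := Prod.ext hp1 rfl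
      rw [hpe]; exact h1
  have hπc : ContinuousOn π (Set.Icc s t) := by
    rw [continuousOn_iff_continuous_restrict]
    have hre : Set.domRestrict (Set.Icc s t) π =
        fun r : Set.Icc s t => ((h.symm r : A) : ℝ × ℝ).1 := by
      funext r
      rw [Set.restrict_apply, hπval r r.2, Subtype.coe_eta]
    rw [hre]
    exact continuous_fst.comp (continuous_subtype_val.comp h.symm.continuous)
  exact ⟨⟨π, hπc, hπs, hπt, hAeq2⟩,
    fun le hle a ha b hb => ord_char hd hst hxA hyA hle a ha b hb⟩
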